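/- Let X be a topological space and {U_n : n ∈ ω} a decreasing sequence of open sets with ⋂_n U_n = ⋂_n cl(U_n); put C = ⋂_n U_n. Then the following are equivalent: (1) every sequence (x_n) with x_n ∈ U_n for each n has a cluster point in X; (2) the family {U_n} is a neighborhood base at C in X and C is countably compact. -/

import Mathlib

open Filter Topology

private lemma mapClusterPt_subtype' {X : Type*} [TopologicalSpace X] {s : Set X} {p : s}
    {x : ℕ → s} :
    MapClusterPt (p : X) atTop (fun n => (x n : X)) ↔ MapClusterPt p atTop x := by
  have h := (IsInducing.subtypeVal (t := s)).mapClusterPt_iff (x := p)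
    (l := Filter.map x atTop)
  simpa [MapClusterPt, Filter.map_map, Function.comp_def] using h

private lemma mapClusterPt_of_tails {X : Type*} [TopologicalSpace X] {x : ℕ → X} {p : X}
    (h : ∀ m, p ∈ closure (x '' Set.Ici m)) : MapClusterPt p atTop x := by
  rw [mapClusterPt_iff_frequently]
  intro s hs
  rw [frequently_atTop]
  intro m
  obtain ⟨z, hzs, n, hn, rfl⟩ := mem_closure_iff_nhds.mp (h m) s hs
  exact ⟨n, hn, hzs⟩

theorem stmt_11 {X : Type*} [TopologicalSpace X] (U : ℕ → Set X)
    (hopen : ∀ n, IsOpen (U n)) (hdec : Antitone U)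
    (hcl : ⋂ n, U n = ⋂ n, closure (U n)) (C : Set X) (hC : C = ⋂ n, U n) :
    (∀ x : ℕ → X, (∀ n, x n ∈ U n) → ∃ p : X, MapClusterPt p atTop x) ↔
      ((∀ O : Set X, IsOpen O → C ⊆ O → ∃ n, U n ⊆ O) ∧
        (∀ x : ℕ → C, ∃ p : C, MapClusterPt p atTop x)) := by
  subst hC
  constructor
  · intro h1
    constructor
    · intro O hO hCO
      by_contra hcon
      push_neg at hcon
      choose x hxU hxO using fun n => Set.not_subset.mp (hcon n)
      obtain ⟨p, hp⟩ := h1 x hxU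
      rw [mapClusterPt_iff_frequently] at hp
      have hpC : p ∈ ⋂ n, U n := by
        rw [hcl]
        refine Set.mem_iInter.2 fun m => mem_closure_iff_nhds.mpr fun s hs => ?_
        obtain ⟨n, hn, hns⟩ := frequently_atTop.mp (hp s hs) m
        exact ⟨x n, hns, hdec hn (hxU n)⟩
      obtain ⟨n, -, hm⟩ := frequently_atTop.mp (hp O (hO.mem_nhds (hCO hpC))) 0
      exact hxO n hm
    · intro x
      obtain ⟨p, hp⟩ := h1 (fun n => (x n : X)) (fun n => Set.mem_iInter.mp (x n).2 n)
      have hp' := hp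
      rw [mapClusterPt_iff_frequently] at hp'
      have hpC : p ∈ ⋂ n, U n := by
        rw [hcl]
        refine Set.mem_iInter.2 fun m => mem_closure_iff_nhds.mpr fun s hs => ?_
        obtain ⟨n, -, hns⟩ := frequently_atTop.mp (hp' s hs) 0
        exact ⟨x n, hns, Set.mem_iInter.mp (x n).2 m⟩
      exact ⟨⟨p, hpC⟩, mapClusterPt_subtype'.mp hp⟩
  · rintro ⟨hbase, hcc⟩ x hxU
    set T : ℕ → Set X := fun m => closure (x '' Set.Ici m) with hT
    by_cases hcase : ∀ m, ((⋂ n, U n) ∩ T m).Nonempty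
    · choose y hy using hcase
      obtain ⟨⟨p, hpC⟩, hp⟩ := hcc (fun m => ⟨y m, (hy m).1⟩)
      have hpX : MapClusterPt p atTop y := mapClusterPt_subtype'.mpr hp
      rw [mapClusterPt_iff_frequently] at hpX
      refine ⟨p, mapClusterPt_of_tails fun k => ?_⟩
      have hclosed : IsClosed (T k) := isClosed_closure
      show p ∈ T k
      rw [← hclosed.closure_eq]
      refine mem_closure_iff_nhds.mpr fun s hs => ?_
      obtain ⟨m, hm, hms⟩ := frequently_atTop.mp (hpX s hs) k
      exact ⟨y m, hms,
        closure_mono (Set.image_mono  (Set.Ici_subset_Ici.2 hm)) (hy m).2⟩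
    · push_neg at hcase
      obtain ⟨m, hm⟩ := hcase
      obtain ⟨k, hk⟩ := hbase (T m)ᶜ isClosed_closure.isOpen_compl
        (Set.subset_compl_iff_disjoint_right.mpr (Set.disjoint_iff_inter_eq_empty.mpr hm))
      have hmem : x (max m k) ∈ T m :=
        subset_closure ⟨max m k, le_max_left m k, rfl⟩
      exact absurd hmem (hk (hdec (le_max_right m k) (hxU _)))
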